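/- Let H ∈ (1/2,1), T>0 and n ∈ ℕ. There exists a constant C>0, depending only on H (and T), such that for every f ∈ L²([0,T];ℝⁿ), ∫_0^T | C_H t^{H−1/2} ∫_0^t (t−s)^{H−3/2} s^{1/2−H} f(s) ds |² dt ≤ C ∫_0^T |f(s)|² ds; that is, the operator K̇_H is bounded on L²([0,T];ℝⁿ). -/

import Mathlib

open MeasureTheory Set
open scoped ENNReal NNReal

/-- The Beta function, `B(a,b) = Γ(a)Γ(b)/Γ(a+b)`. -/
noncomputable def realBeta (a b : ℝ) : ℝ :=
  Real.Gamma a * Real.Gamma b / Real.Gamma (a + b)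

/-- The normalizing constant `C_H = √(H(2H−1)/B(2−2H, H−1/2))`. -/
noncomputable def CH (H : ℝ) : ℝ :=
  Real.sqrt (H * (2 * H - 1) / realBeta (2 - 2 * H) (H - 1 / 2))

/-- The operator `K̇_H`:
`(K̇_H f)(t) = C_H t^{H−1/2} ∫_0^t (t−s)^{H−3/2} s^{1/2−H} f(s) ds`. -/
noncomputable def dotKH {n : ℕ} (H : ℝ) (f : ℝ → EuclideanSpace ℝ (Fin n)) (t : ℝ) :
    EuclideanSpace ℝ (Fin n) :=
  (CH H * t ^ (H - 1 / 2)) • ∫ s in (0:ℝ)..t, ((t - s) ^ (H - 3 / 2) * s ^ ((1:ℝ) / 2 - H)) • f s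

lemma lint_rpow (r c : ℝ) (hr : -1 < r) (hc : 0 ≤ c) :
    ∫⁻ s in Ioc (0:ℝ) c, ENNReal.ofReal (s ^ r) = ENNReal.ofReal (c ^ (r+1) / (r+1)) := by
  have hint : IntervalIntegrable (fun s : ℝ => s ^ r) volume 0 c :=
    intervalIntegral.intervalIntegrable_rpow' hr
  have hio : IntegrableOn (fun s : ℝ => s ^ r) (Ioc 0 c) volume :=
    (intervalIntegrable_iff_integrableOn_Ioc_of_le hc).mp hint
  rw [← ofReal_integral_eq_lintegral_ofReal hio]
  · congr 1
    have := integral_rpow (a := 0) (b := c) (Or.inl hr)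
    rw [intervalIntegral.integral_of_le hc] at this
    rw [this, Real.zero_rpow (by linarith), sub_zero]
  · filter_upwards [ae_restrict_mem measurableSet_Ioc] with s hs
    exact Real.rpow_nonneg hs.1.le r

lemma lint_rpow_sub_left (r a b : ℝ) (hr : -1 < r) (hab : a ≤ b) :
    ∫⁻ s in Ioc a b, ENNReal.ofReal ((b - s) ^ r)
      = ENNReal.ofReal ((b - a) ^ (r+1) / (r+1)) := by
  have hint0 : IntervalIntegrable (fun s : ℝ => s ^ r) volume 0 (b - a) :=
    intervalIntegral.intervalIntegrable_rpow' hr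
  have hint : IntervalIntegrable (fun s : ℝ => (b - s) ^ r) volume a b := by
    have := (hint0.comp_sub_left b).symm
    simpa [sub_sub_cancel] using this
  have hio : IntegrableOn (fun s : ℝ => (b - s) ^ r) (Ioc a b) volume :=
    (intervalIntegrable_iff_integrableOn_Ioc_of_le hab).mp hint
  rw [← ofReal_integral_eq_lintegral_ofReal hio]
  · congr 1
    rw [← intervalIntegral.integral_of_le hab,
      intervalIntegral.integral_comp_sub_left (fun s : ℝ => s ^ r) b, sub_self]
    have := integral_rpow (a := 0) (b := b - a) (Or.inl hr)
    rw [this, Real.zero_rpow (by linarith), sub_zero]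
  · filter_upwards [ae_restrict_mem measurableSet_Ioc] with s hs
    exact Real.rpow_nonneg (by linarith [hs.2]) r

lemma lint_rpow_sub_right (r a b : ℝ) (hr : -1 < r) (hab : a ≤ b) :
    ∫⁻ s in Ioc a b, ENNReal.ofReal ((s - a) ^ r)
      = ENNReal.ofReal ((b - a) ^ (r+1) / (r+1)) := by
  have hint0 : IntervalIntegrable (fun s : ℝ => s ^ r) volume 0 (b - a) :=
    intervalIntegral.intervalIntegrable_rpow' hr
  have hint : IntervalIntegrable (fun s : ℝ => (s - a) ^ r) volume a b := by
    have := hint0.comp_sub_right a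
    simpa using this
  have hio : IntegrableOn (fun s : ℝ => (s - a) ^ r) (Ioc a b) volume :=
    (intervalIntegrable_iff_integrableOn_Ioc_of_le hab).mp hint
  rw [← ofReal_integral_eq_lintegral_ofReal hio]
  · congr 1
    rw [← intervalIntegral.integral_of_le hab,
      intervalIntegral.integral_comp_sub_right (fun s : ℝ => s ^ r) a, sub_self]
    have := integral_rpow (a := 0) (b := b - a) (Or.inl hr)
    rw [this, Real.zero_rpow (by linarith), sub_zero]
  · filter_upwards [ae_restrict_mem measurableSet_Ioc] with s hs
    exact Real.rpow_nonneg (by linarith [hs.1]) r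

lemma CH_nonneg (H : ℝ) : 0 ≤ CH H := Real.sqrt_nonneg _

/-- The (nonnegative, extended-real valued) kernel of `K̇_H`. -/
noncomputable def Kk (H : ℝ) (t s : ℝ) : ℝ≥0∞ :=
  if 0 < s ∧ s < t then
    ENNReal.ofReal (CH H * t ^ (H - 1/2) * ((t - s) ^ (H - 3/2) * s ^ (1/2 - H)))
  else 0

lemma Kk_measurable (H : ℝ) : Measurable (Function.uncurry (Kk H)) := by
  unfold Kk Function.uncurry
  apply Measurable.ite
  · exact (measurableSet_lt measurable_const measurable_snd).inter
      (measurableSet_lt measurable_snd measurable_fst)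
  · apply ENNReal.measurable_ofReal.comp
    fun_prop
  · exact measurable_const

noncomputable def rowC (H T : ℝ) : ℝ :=
  CH H * T ^ (H - 1/2) * (2:ℝ) ^ ((1:ℝ)/2) * (1/(1-H) + 1/(H - 1/2))

noncomputable def colC (H T : ℝ) : ℝ :=
  CH H * T ^ (H - 1/2) * (1/(H - 1/2))

lemma Kk_row {H T : ℝ} (hH : 1/2 < H) (hH1 : H < 1) {t : ℝ} (ht : t ∈ Ioc (0:ℝ) T) :
    ∫⁻ s in Ioc (0:ℝ) T, Kk H t s * ENNReal.ofReal (s ^ (-(1/2):ℝ))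
      ≤ ENNReal.ofReal (rowC H T) * ENNReal.ofReal (t ^ (-(1/2):ℝ)) := by
  obtain ⟨ht0, htT⟩ := ht
  have hCH := CH_nonneg H
  have htn : (0:ℝ) ≤ t ^ (H - 1/2) := Real.rpow_nonneg ht0.le _
  have hhalf : (0:ℝ) < t/2 := by linarith
  -- restrict to Ioc 0 t
  have hstep1 : ∫⁻ s in Ioc (0:ℝ) T, Kk H t s * ENNReal.ofReal (s ^ (-(1/2):ℝ))
      = ∫⁻ s in Ioc (0:ℝ) t, Kk H t s * ENNReal.ofReal (s ^ (-(1/2):ℝ)) := by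
    rw [← Set.Ioc_union_Ioc_eq_Ioc ht0.le htT,
      lintegral_union measurableSet_Ioc (Set.Ioc_disjoint_Ioc_of_le le_rfl)]
    have : ∫⁻ s in Ioc t T, Kk H t s * ENNReal.ofReal (s ^ (-(1/2):ℝ)) = 0 := by
      rw [setLIntegral_congr_fun_ae measurableSet_Ioc
        (ae_of_all _ (fun s hs => ?_)), lintegral_zero]
      have : ¬ (0 < s ∧ s < t) := fun h => absurd hs.1 (not_lt.mpr h.2.le)
      simp [Kk, this]
    rw [this, add_zero]
  rw [hstep1, ← Set.Ioc_union_Ioc_eq_Ioc (le_of_lt hhalf) (by linarith : t/2 ≤ t),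
    lintegral_union measurableSet_Ioc (Set.Ioc_disjoint_Ioc_of_le le_rfl)]
  -- part 1
  have p1 : ∫⁻ s in Ioc (0:ℝ) (t/2), Kk H t s * ENNReal.ofReal (s ^ (-(1/2):ℝ))
      ≤ ENNReal.ofReal (CH H * t ^ (H - 1/2) * (t/2) ^ (H - 3/2))
        * ENNReal.ofReal ((t/2) ^ (-H + 1) / (-H + 1)) := by
    have hb : ∀ s ∈ Ioc (0:ℝ) (t/2), Kk H t s * ENNReal.ofReal (s ^ (-(1/2):ℝ))
        ≤ ENNReal.ofReal (CH H * t ^ (H - 1/2) * (t/2) ^ (H - 3/2))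
          * ENNReal.ofReal (s ^ (-H)) := by
      intro s hs
      have hs0 := hs.1
      have hst : s < t := lt_of_le_of_lt hs.2 (by linarith)
      have hts : (0:ℝ) ≤ t - s := by linarith
      rw [Kk, if_pos ⟨hs0, hst⟩, ← ENNReal.ofReal_mul
        (mul_nonneg (mul_nonneg hCH htn)
          (mul_nonneg (Real.rpow_nonneg hts _) (Real.rpow_nonneg hs0.le _))),
        ← ENNReal.ofReal_mul
          (mul_nonneg (mul_nonneg hCH htn) (Real.rpow_nonneg hhalf.le _))]
      apply ENNReal.ofReal_le_ofReal
      have e1 : s ^ ((1:ℝ)/2 - H) * s ^ (-(1/2):ℝ) = s ^ (-H) := by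
        rw [← Real.rpow_add hs0]; ring_nf
      calc CH H * t ^ (H - 1/2) * ((t - s) ^ (H - 3/2) * s ^ (1/2 - H)) * s ^ (-(1/2):ℝ)
          = (CH H * t ^ (H - 1/2)) * ((t - s) ^ (H - 3/2)
              * (s ^ ((1:ℝ)/2 - H) * s ^ (-(1/2):ℝ))) := by ring
        _ = (CH H * t ^ (H - 1/2)) * ((t - s) ^ (H - 3/2) * s ^ (-H)) := by rw [e1]
        _ ≤ (CH H * t ^ (H - 1/2)) * ((t/2) ^ (H - 3/2) * s ^ (-H)) := by
            apply mul_le_mul_of_nonneg_left _ (mul_nonneg hCH htn)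
            apply mul_le_mul_of_nonneg_right _ (Real.rpow_nonneg hs0.le _)
            exact Real.rpow_le_rpow_of_nonpos hhalf (by linarith [hs.2]) (by linarith)
        _ = CH H * t ^ (H - 1/2) * (t/2) ^ (H - 3/2) * s ^ (-H) := by ring
    calc ∫⁻ s in Ioc (0:ℝ) (t/2), Kk H t s * ENNReal.ofReal (s ^ (-(1/2):ℝ))
        ≤ ∫⁻ s in Ioc (0:ℝ) (t/2), ENNReal.ofReal (CH H * t ^ (H - 1/2) * (t/2) ^ (H - 3/2))
            * ENNReal.ofReal (s ^ (-H)) := setLIntegral_mono' measurableSet_Ioc hb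
      _ = ENNReal.ofReal (CH H * t ^ (H - 1/2) * (t/2) ^ (H - 3/2))
            * ∫⁻ s in Ioc (0:ℝ) (t/2), ENNReal.ofReal (s ^ (-H)) :=
          lintegral_const_mul' _ _ ENNReal.ofReal_ne_top
      _ = _ := by rw [lint_rpow (-H) (t/2) (by linarith) hhalf.le]
  -- part 2
  have p2 : ∫⁻ s in Ioc (t/2) t, Kk H t s * ENNReal.ofReal (s ^ (-(1/2):ℝ))
      ≤ ENNReal.ofReal (CH H * t ^ (H - 1/2) * (t/2) ^ (-H))
        * ENNReal.ofReal ((t - t/2) ^ (H - 3/2 + 1) / (H - 3/2 + 1)) := by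
    have hb : ∀ s ∈ Ioc (t/2) t, Kk H t s * ENNReal.ofReal (s ^ (-(1/2):ℝ))
        ≤ ENNReal.ofReal (CH H * t ^ (H - 1/2) * (t/2) ^ (-H))
          * ENNReal.ofReal ((t - s) ^ (H - 3/2)) := by
      intro s hs
      rcases eq_or_lt_of_le hs.2 with rfl | hst
      · have : ¬ (0 < s ∧ s < s) := fun h => lt_irrefl s h.2
        simp [Kk, this]
      · have hs0 : (0:ℝ) < s := lt_trans hhalf hs.1
        have hts : (0:ℝ) ≤ t - s := by linarith
        rw [Kk, if_pos ⟨hs0, hst⟩, ← ENNReal.ofReal_mul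
          (mul_nonneg (mul_nonneg hCH htn)
            (mul_nonneg (Real.rpow_nonneg hts _) (Real.rpow_nonneg hs0.le _))),
          ← ENNReal.ofReal_mul
            (mul_nonneg (mul_nonneg hCH htn) (Real.rpow_nonneg hhalf.le _))]
        apply ENNReal.ofReal_le_ofReal
        have e1 : s ^ ((1:ℝ)/2 - H) * s ^ (-(1/2):ℝ) = s ^ (-H) := by
          rw [← Real.rpow_add hs0]; ring_nf
        calc CH H * t ^ (H - 1/2) * ((t - s) ^ (H - 3/2) * s ^ (1/2 - H)) * s ^ (-(1/2):ℝ)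
            = (CH H * t ^ (H - 1/2)) * ((s ^ ((1:ℝ)/2 - H) * s ^ (-(1/2):ℝ))
                * (t - s) ^ (H - 3/2)) := by ring
          _ = (CH H * t ^ (H - 1/2)) * (s ^ (-H) * (t - s) ^ (H - 3/2)) := by rw [e1]
          _ ≤ (CH H * t ^ (H - 1/2)) * ((t/2) ^ (-H) * (t - s) ^ (H - 3/2)) := by
              apply mul_le_mul_of_nonneg_left _ (mul_nonneg hCH htn)
              apply mul_le_mul_of_nonneg_right _ (Real.rpow_nonneg hts _)
              exact Real.rpow_le_rpow_of_nonpos hhalf hs.1.le (by linarith)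
          _ = CH H * t ^ (H - 1/2) * (t/2) ^ (-H) * (t - s) ^ (H - 3/2) := by ring
    calc ∫⁻ s in Ioc (t/2) t, Kk H t s * ENNReal.ofReal (s ^ (-(1/2):ℝ))
        ≤ ∫⁻ s in Ioc (t/2) t, ENNReal.ofReal (CH H * t ^ (H - 1/2) * (t/2) ^ (-H))
            * ENNReal.ofReal ((t - s) ^ (H - 3/2)) := setLIntegral_mono' measurableSet_Ioc hb
      _ = ENNReal.ofReal (CH H * t ^ (H - 1/2) * (t/2) ^ (-H))
            * ∫⁻ s in Ioc (t/2) t, ENNReal.ofReal ((t - s) ^ (H - 3/2)) :=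
          lintegral_const_mul' _ _ ENNReal.ofReal_ne_top
      _ = _ := by rw [lint_rpow_sub_left (H - 3/2) (t/2) t (by linarith) (by linarith)]
  -- combine
  have h1H : (0:ℝ) < 1 - H := by linarith
  have hH2 : (0:ℝ) < H - 1/2 := by linarith
  have hS : (0:ℝ) ≤ 1/(1-H) + 1/(H - 1/2) :=
    add_nonneg (le_of_lt (by positivity)) (le_of_lt (by positivity))
  have hTn : (0:ℝ) ≤ T ^ (H - 1/2) := Real.rpow_nonneg (by linarith) _
  have c1n : (0:ℝ) ≤ CH H * t ^ (H - 1/2) * (t/2) ^ (H - 3/2) :=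
    mul_nonneg (mul_nonneg hCH htn) (Real.rpow_nonneg hhalf.le _)
  have c2n : (0:ℝ) ≤ CH H * t ^ (H - 1/2) * (t/2) ^ (-H) :=
    mul_nonneg (mul_nonneg hCH htn) (Real.rpow_nonneg hhalf.le _)
  have d1n : (0:ℝ) ≤ (t/2) ^ (-H + 1) / (-H + 1) := by
    apply div_nonneg (Real.rpow_nonneg hhalf.le _) (by linarith)
  have d2n : (0:ℝ) ≤ (t - t/2) ^ (H - 3/2 + 1) / (H - 3/2 + 1) := by
    apply div_nonneg (Real.rpow_nonneg (by linarith) _) (by linarith)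
  have f1 : (t/2) ^ (H - 3/2) * (t/2) ^ (-H + 1) = (t/2) ^ (-(1/2):ℝ) := by
    rw [← Real.rpow_add hhalf]; ring_nf
  have f2 : (t/2) ^ (-H) * (t/2) ^ (H - 3/2 + 1) = (t/2) ^ (-(1/2):ℝ) := by
    rw [← Real.rpow_add hhalf]; ring_nf
  have f3 : (t/2) ^ (-(1/2):ℝ) = t ^ (-(1/2):ℝ) * (2:ℝ) ^ ((1:ℝ)/2) := by
    rw [Real.div_rpow ht0.le (by norm_num : (0:ℝ) ≤ 2),
      Real.rpow_neg (by norm_num : (0:ℝ) ≤ 2), div_inv_eq_mul]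
  have f5 : t ^ (H - 1/2) ≤ T ^ (H - 1/2) :=
    Real.rpow_le_rpow ht0.le htT (by linarith)
  have erw : CH H * t ^ (H - 1/2) * (t/2) ^ (H - 3/2) * ((t/2) ^ (-H + 1) / (-H + 1))
      + CH H * t ^ (H - 1/2) * (t/2) ^ (-H) * ((t - t/2) ^ (H - 3/2 + 1) / (H - 3/2 + 1))
      = (CH H * (2:ℝ) ^ ((1:ℝ)/2) * (1/(1-H) + 1/(H - 1/2)) * t ^ (H - 1/2))
          * t ^ (-(1/2):ℝ) := by
    have ht2 : t - t/2 = t/2 := by ring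
    rw [ht2]
    calc CH H * t ^ (H - 1/2) * (t/2) ^ (H - 3/2) * ((t/2) ^ (-H + 1) / (-H + 1))
        + CH H * t ^ (H - 1/2) * (t/2) ^ (-H) * ((t/2) ^ (H - 3/2 + 1) / (H - 3/2 + 1))
        = CH H * t ^ (H - 1/2) * ((t/2) ^ (H - 3/2) * (t/2) ^ (-H + 1)) * (1 / (-H + 1))
          + CH H * t ^ (H - 1/2) * ((t/2) ^ (-H) * (t/2) ^ (H - 3/2 + 1))
            * (1 / (H - 3/2 + 1)) := by ring
      _ = CH H * t ^ (H - 1/2) * (t ^ (-(1/2):ℝ) * (2:ℝ) ^ ((1:ℝ)/2)) * (1 / (-H + 1))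
          + CH H * t ^ (H - 1/2) * (t ^ (-(1/2):ℝ) * (2:ℝ) ^ ((1:ℝ)/2))
            * (1 / (H - 3/2 + 1)) := by rw [f1, f2, f3]
      _ = _ := by ring
  calc (∫⁻ s in Ioc (0:ℝ) (t/2), Kk H t s * ENNReal.ofReal (s ^ (-(1/2):ℝ)))
        + ∫⁻ s in Ioc (t/2) t, Kk H t s * ENNReal.ofReal (s ^ (-(1/2):ℝ))
      ≤ ENNReal.ofReal (CH H * t ^ (H - 1/2) * (t/2) ^ (H - 3/2))
          * ENNReal.ofReal ((t/2) ^ (-H + 1) / (-H + 1))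
        + ENNReal.ofReal (CH H * t ^ (H - 1/2) * (t/2) ^ (-H))
          * ENNReal.ofReal ((t - t/2) ^ (H - 3/2 + 1) / (H - 3/2 + 1)) := add_le_add p1 p2
    _ = ENNReal.ofReal (CH H * t ^ (H - 1/2) * (t/2) ^ (H - 3/2) * ((t/2) ^ (-H + 1) / (-H + 1))
          + CH H * t ^ (H - 1/2) * (t/2) ^ (-H)
            * ((t - t/2) ^ (H - 3/2 + 1) / (H - 3/2 + 1))) := by
        rw [← ENNReal.ofReal_mul c1n, ← ENNReal.ofReal_mul c2n,
          ← ENNReal.ofReal_add (mul_nonneg c1n d1n) (mul_nonneg c2n d2n)]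
    _ ≤ ENNReal.ofReal (rowC H T * t ^ (-(1/2):ℝ)) := by
        apply ENNReal.ofReal_le_ofReal
        rw [erw, rowC]
        apply mul_le_mul_of_nonneg_right _ (Real.rpow_nonneg ht0.le _)
        calc CH H * (2:ℝ) ^ ((1:ℝ)/2) * (1/(1-H) + 1/(H - 1/2)) * t ^ (H - 1/2)
            ≤ CH H * (2:ℝ) ^ ((1:ℝ)/2) * (1/(1-H) + 1/(H - 1/2)) * T ^ (H - 1/2) := by
              apply mul_le_mul_of_nonneg_left f5
              exact mul_nonneg (mul_nonneg hCH (by positivity)) hS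
          _ = CH H * T ^ (H - 1/2) * (2:ℝ) ^ ((1:ℝ)/2) * (1/(1-H) + 1/(H - 1/2)) := by ring
    _ = ENNReal.ofReal (rowC H T) * ENNReal.ofReal (t ^ (-(1/2):ℝ)) := by
        rw [ENNReal.ofReal_mul]
        rw [rowC]
        exact mul_nonneg (mul_nonneg (mul_nonneg hCH hTn) (by positivity)) hS

lemma Kk_col {H T : ℝ} (hH : 1/2 < H) (hH1 : H < 1) {s : ℝ} (hs : s ∈ Ioc (0:ℝ) T) :
    ∫⁻ t in Ioc (0:ℝ) T, Kk H t s * ENNReal.ofReal (t ^ (-(1/2):ℝ))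
      ≤ ENNReal.ofReal (colC H T) * ENNReal.ofReal (s ^ (-(1/2):ℝ)) := by
  obtain ⟨hs0, hsT⟩ := hs
  have hCH := CH_nonneg H
  have hsn : (0:ℝ) ≤ s ^ ((1:ℝ)/2 - H) := Real.rpow_nonneg hs0.le _
  have hsn' : (0:ℝ) ≤ s ^ (H - 1) := Real.rpow_nonneg hs0.le _
  -- restrict to Ioc s T
  have hstep1 : ∫⁻ t in Ioc (0:ℝ) T, Kk H t s * ENNReal.ofReal (t ^ (-(1/2):ℝ))
      = ∫⁻ t in Ioc s T, Kk H t s * ENNReal.ofReal (t ^ (-(1/2):ℝ)) := by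
    rw [← Set.Ioc_union_Ioc_eq_Ioc hs0.le hsT,
      lintegral_union measurableSet_Ioc (Set.Ioc_disjoint_Ioc_of_le le_rfl)]
    have : ∫⁻ t in Ioc (0:ℝ) s, Kk H t s * ENNReal.ofReal (t ^ (-(1/2):ℝ)) = 0 := by
      rw [setLIntegral_congr_fun_ae measurableSet_Ioc
        (ae_of_all _ (fun t ht => ?_)), lintegral_zero]
      have : ¬ (0 < s ∧ s < t) := fun h => absurd ht.2 (not_le.mpr h.2)
      simp [Kk, this]
    rw [this, zero_add]
  rw [hstep1]
  have hb : ∀ t ∈ Ioc s T, Kk H t s * ENNReal.ofReal (t ^ (-(1/2):ℝ))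
      ≤ ENNReal.ofReal (CH H * s ^ ((1:ℝ)/2 - H) * s ^ (H - 1))
        * ENNReal.ofReal ((t - s) ^ (H - 3/2)) := by
    intro t ht
    have hst : s < t := ht.1
    have ht0 : (0:ℝ) < t := lt_trans hs0 hst
    have hts : (0:ℝ) ≤ t - s := by linarith
    have htn : (0:ℝ) ≤ t ^ (H - 1/2) := Real.rpow_nonneg ht0.le _
    rw [Kk, if_pos ⟨hs0, hst⟩, ← ENNReal.ofReal_mul
      (mul_nonneg (mul_nonneg hCH htn)
        (mul_nonneg (Real.rpow_nonneg hts _) (Real.rpow_nonneg hs0.le _))),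
      ← ENNReal.ofReal_mul (mul_nonneg (mul_nonneg hCH hsn) hsn')]
    apply ENNReal.ofReal_le_ofReal
    have e1 : t ^ (H - 1/2) * t ^ (-(1/2):ℝ) = t ^ (H - 1) := by
      rw [← Real.rpow_add ht0]; ring_nf
    calc CH H * t ^ (H - 1/2) * ((t - s) ^ (H - 3/2) * s ^ (1/2 - H)) * t ^ (-(1/2):ℝ)
        = (CH H * s ^ ((1:ℝ)/2 - H)) * ((t ^ (H - 1/2) * t ^ (-(1/2):ℝ))
            * (t - s) ^ (H - 3/2)) := by ring
      _ = (CH H * s ^ ((1:ℝ)/2 - H)) * (t ^ (H - 1) * (t - s) ^ (H - 3/2)) := by rw [e1]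
      _ ≤ (CH H * s ^ ((1:ℝ)/2 - H)) * (s ^ (H - 1) * (t - s) ^ (H - 3/2)) := by
          apply mul_le_mul_of_nonneg_left _ (mul_nonneg hCH hsn)
          apply mul_le_mul_of_nonneg_right _ (Real.rpow_nonneg hts _)
          exact Real.rpow_le_rpow_of_nonpos hs0 hst.le (by linarith)
      _ = CH H * s ^ ((1:ℝ)/2 - H) * s ^ (H - 1) * (t - s) ^ (H - 3/2) := by ring
  have hTs : (0:ℝ) ≤ T - s := by linarith
  calc ∫⁻ t in Ioc s T, Kk H t s * ENNReal.ofReal (t ^ (-(1/2):ℝ))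
      ≤ ∫⁻ t in Ioc s T, ENNReal.ofReal (CH H * s ^ ((1:ℝ)/2 - H) * s ^ (H - 1))
          * ENNReal.ofReal ((t - s) ^ (H - 3/2)) := setLIntegral_mono' measurableSet_Ioc hb
    _ = ENNReal.ofReal (CH H * s ^ ((1:ℝ)/2 - H) * s ^ (H - 1))
          * ∫⁻ t in Ioc s T, ENNReal.ofReal ((t - s) ^ (H - 3/2)) :=
        lintegral_const_mul' _ _ ENNReal.ofReal_ne_top
    _ = ENNReal.ofReal (CH H * s ^ ((1:ℝ)/2 - H) * s ^ (H - 1))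
          * ENNReal.ofReal ((T - s) ^ (H - 3/2 + 1) / (H - 3/2 + 1)) := by
        rw [lint_rpow_sub_right (H - 3/2) s T (by linarith) hsT]
    _ ≤ ENNReal.ofReal (colC H T) * ENNReal.ofReal (s ^ (-(1/2):ℝ)) := by
        rw [← ENNReal.ofReal_mul (mul_nonneg (mul_nonneg hCH hsn) hsn'),
          ← ENNReal.ofReal_mul (by
            rw [colC]
            apply mul_nonneg (mul_nonneg hCH (Real.rpow_nonneg (by linarith) _))
            have : (0:ℝ) < H - 1/2 := by linarith
            positivity)]
        apply ENNReal.ofReal_le_ofReal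
        have e2 : s ^ ((1:ℝ)/2 - H) * s ^ (H - 1) = s ^ (-(1/2):ℝ) := by
          rw [← Real.rpow_add hs0]; ring_nf
        have e3 : (T - s) ^ (H - 3/2 + 1) ≤ T ^ (H - 3/2 + 1) :=
          Real.rpow_le_rpow hTs (by linarith) (by linarith)
        have e4 : H - 3/2 + 1 = H - 1/2 := by ring
        rw [colC]
        calc CH H * s ^ ((1:ℝ)/2 - H) * s ^ (H - 1) * ((T - s) ^ (H - 3/2 + 1) / (H - 3/2 + 1))
            = (CH H * (s ^ ((1:ℝ)/2 - H) * s ^ (H - 1))) * (T - s) ^ (H - 3/2 + 1)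
              * (1/(H - 3/2 + 1)) := by ring
          _ ≤ (CH H * (s ^ ((1:ℝ)/2 - H) * s ^ (H - 1))) * T ^ (H - 3/2 + 1)
              * (1/(H - 3/2 + 1)) := by
              apply mul_le_mul_of_nonneg_right _ (by
                have : (0:ℝ) < H - 3/2 + 1 := by linarith
                positivity)
              exact mul_le_mul_of_nonneg_left e3 (mul_nonneg hCH (mul_nonneg hsn hsn'))
          _ = CH H * T ^ (H - 1/2) * (1/(H - 1/2)) * s ^ (-(1/2):ℝ) := by
              rw [e2, e4]; ring

lemma h_ne_zero {x : ℝ} (hx : 0 < x) : ENNReal.ofReal (x ^ (-(1/2):ℝ)) ≠ 0 := by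
  simp only [ne_eq, ENNReal.ofReal_eq_zero, not_le]
  exact Real.rpow_pos_of_pos hx _

lemma Kk_meas_left (H t : ℝ) : Measurable (fun s => Kk H t s) :=
  (Kk_measurable H).comp (measurable_const.prodMk measurable_id)

lemma Kk_meas_right (H s : ℝ) : Measurable (fun t => Kk H t s) :=
  (Kk_measurable H).comp (measurable_id.prodMk measurable_const)

lemma h_meas : Measurable (fun x : ℝ => ENNReal.ofReal (x ^ (-(1/2):ℝ))) := by
  apply ENNReal.measurable_ofReal.comp
  fun_prop

lemma schur {H T : ℝ} (hH : 1/2 < H) (hH1 : H < 1) {g : ℝ → ℝ≥0∞}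
    (hg : Measurable g) :
    ∫⁻ t in Ioc (0:ℝ) T, (∫⁻ s in Ioc (0:ℝ) T, Kk H t s * g s) ^ 2
      ≤ (ENNReal.ofReal (rowC H T) + ENNReal.ofReal (colC H T)) ^ 2
        * ∫⁻ s in Ioc (0:ℝ) T, (g s) ^ 2 := by
  set A : ℝ≥0∞ := ENNReal.ofReal (rowC H T) + ENNReal.ofReal (colC H T) with hA
  have hAtop : A ≠ ∞ := by simp [hA]
  set h : ℝ → ℝ≥0∞ := fun x => ENNReal.ofReal (x ^ (-(1/2):ℝ)) with hh
  have hhtop : ∀ x, h x ≠ ∞ := fun x => ENNReal.ofReal_ne_top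
  have hrow : ∀ t ∈ Ioc (0:ℝ) T,
      ∫⁻ s in Ioc (0:ℝ) T, Kk H t s * h s ≤ A * h t := fun t ht =>
    (Kk_row hH hH1 ht).trans (mul_le_mul_left le_self_add _)
  have hcol : ∀ s ∈ Ioc (0:ℝ) T,
      ∫⁻ t in Ioc (0:ℝ) T, Kk H t s * h t ≤ A * h s := fun s hs =>
    (Kk_col hH hH1 hs).trans (mul_le_mul_left le_add_self _)
  set W : ℝ → ℝ≥0∞ := fun t => ∫⁻ s in Ioc (0:ℝ) T, Kk H t s * g s ^ 2 * (h s)⁻¹ with hW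
  -- pointwise Schur--Hölder bound
  have stepA : ∀ t ∈ Ioc (0:ℝ) T,
      (∫⁻ s in Ioc (0:ℝ) T, Kk H t s * g s) ^ 2 ≤ A * h t * W t := by
    intro t ht
    have hFm : Measurable (fun s => ((Kk H t s * h s) ^ ((1:ℝ)/2))) :=
      ((Kk_meas_left H t).mul h_meas).pow_const _
    have hGm : Measurable (fun s => ((Kk H t s * g s ^ 2 * (h s)⁻¹) ^ ((1:ℝ)/2))) :=
      (((Kk_meas_left H t).mul (hg.pow_const 2)).mul h_meas.inv).pow_const _
    have key : ∀ s ∈ Ioc (0:ℝ) T, Kk H t s * g s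
        = (Kk H t s * h s) ^ ((1:ℝ)/2) * (Kk H t s * g s ^ 2 * (h s)⁻¹) ^ ((1:ℝ)/2) := by
      intro s hs
      rw [← ENNReal.mul_rpow_of_nonneg _ _ (by norm_num : (0:ℝ) ≤ 1/2)]
      have hcancel : h s * (h s)⁻¹ = 1 :=
        ENNReal.mul_inv_cancel (h_ne_zero hs.1) (hhtop s)
      have e : Kk H t s * h s * (Kk H t s * g s ^ 2 * (h s)⁻¹)
          = (Kk H t s * g s) ^ 2 * (h s * (h s)⁻¹) := by ring
      rw [e, hcancel, mul_one, ← ENNReal.rpow_natCast (Kk H t s * g s) 2,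
        ← ENNReal.rpow_mul]
      norm_num
    have holder := ENNReal.lintegral_mul_le_Lp_mul_Lq (volume.restrict (Ioc (0:ℝ) T))
      Real.HolderConjugate.two_two
      hFm.aemeasurable hGm.aemeasurable
    have e2 : ∀ x : ℝ≥0∞, (x ^ ((1:ℝ)/2)) ^ (2:ℝ) = x := by
      intro x
      rw [← ENNReal.rpow_mul]
      norm_num
    calc (∫⁻ s in Ioc (0:ℝ) T, Kk H t s * g s) ^ 2
        = (∫⁻ s in Ioc (0:ℝ) T, (Kk H t s * h s) ^ ((1:ℝ)/2)
            * (Kk H t s * g s ^ 2 * (h s)⁻¹) ^ ((1:ℝ)/2)) ^ 2 := by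
          rw [setLIntegral_congr_fun_ae measurableSet_Ioc (ae_of_all _ key)]
      _ ≤ ((∫⁻ s in Ioc (0:ℝ) T, ((Kk H t s * h s) ^ ((1:ℝ)/2)) ^ (2:ℝ)) ^ ((1:ℝ)/2)
            * (∫⁻ s in Ioc (0:ℝ) T,
                ((Kk H t s * g s ^ 2 * (h s)⁻¹) ^ ((1:ℝ)/2)) ^ (2:ℝ)) ^ ((1:ℝ)/2)) ^ 2 := by
          apply pow_le_pow_left₀ zero_le _ 2
          simpa [one_div] using holder
      _ = ((∫⁻ s in Ioc (0:ℝ) T, Kk H t s * h s) ^ ((1:ℝ)/2)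
            * (W t) ^ ((1:ℝ)/2)) ^ 2 := by
          simp_rw [e2]
          rfl
      _ ≤ ((A * h t) ^ ((1:ℝ)/2) * (W t) ^ ((1:ℝ)/2)) ^ 2 := by
          apply pow_le_pow_left₀ zero_le _ 2
          exact mul_le_mul_left (ENNReal.rpow_le_rpow (hrow t ht) (by norm_num)) _
      _ = A * h t * W t := by
          rw [mul_pow, ← ENNReal.rpow_natCast ((A * h t) ^ ((1:ℝ)/2)) 2,
            ← ENNReal.rpow_natCast ((W t) ^ ((1:ℝ)/2)) 2, ← ENNReal.rpow_mul,
            ← ENNReal.rpow_mul]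
          norm_num
  -- integrate and swap
  have hprodmeas : AEMeasurable (Function.uncurry fun t s =>
      h t * (Kk H t s * g s ^ 2 * (h s)⁻¹))
      ((volume.restrict (Ioc (0:ℝ) T)).prod (volume.restrict (Ioc (0:ℝ) T))) := by
    apply Measurable.aemeasurable
    have : Function.uncurry (fun t s => h t * (Kk H t s * g s ^ 2 * (h s)⁻¹))
        = fun p : ℝ × ℝ => h p.1 * (Function.uncurry (Kk H) p * g p.2 ^ 2 * (h p.2)⁻¹) := by
      ext p; rfl
    rw [this]
    exact (h_meas.comp measurable_fst).mul
      (((Kk_measurable H).mul ((hg.comp measurable_snd).pow_const 2)).mul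
        ((h_meas.comp measurable_snd).inv))
  calc ∫⁻ t in Ioc (0:ℝ) T, (∫⁻ s in Ioc (0:ℝ) T, Kk H t s * g s) ^ 2
      ≤ ∫⁻ t in Ioc (0:ℝ) T, A * h t * W t :=
        setLIntegral_mono' measurableSet_Ioc stepA
    _ = A * ∫⁻ t in Ioc (0:ℝ) T, h t * W t := by
        simp_rw [mul_assoc]
        rw [lintegral_const_mul' _ _ hAtop]
    _ = A * ∫⁻ t in Ioc (0:ℝ) T, ∫⁻ s in Ioc (0:ℝ) T,
          h t * (Kk H t s * g s ^ 2 * (h s)⁻¹) := by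
        congr 1
        apply lintegral_congr fun t => ?_
        rw [hW, ← lintegral_const_mul' _ _ (hhtop t)]
    _ = A * ∫⁻ s in Ioc (0:ℝ) T, ∫⁻ t in Ioc (0:ℝ) T,
          h t * (Kk H t s * g s ^ 2 * (h s)⁻¹) := by
        congr 1
        exact lintegral_lintegral_swap hprodmeas
    _ ≤ A * ∫⁻ s in Ioc (0:ℝ) T, g s ^ 2 * (h s)⁻¹ * (A * h s) := by
        apply mul_le_mul_right
        apply setLIntegral_mono' measurableSet_Ioc
        intro s hs
        calc ∫⁻ t in Ioc (0:ℝ) T, h t * (Kk H t s * g s ^ 2 * (h s)⁻¹)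
            = ∫⁻ t in Ioc (0:ℝ) T, (Kk H t s * h t) * (g s ^ 2 * (h s)⁻¹) := by
              apply lintegral_congr fun t => ?_
              ring
          _ = (∫⁻ t in Ioc (0:ℝ) T, Kk H t s * h t) * (g s ^ 2 * (h s)⁻¹) :=
              lintegral_mul_const _ ((Kk_meas_right H s).mul h_meas)
          _ ≤ (A * h s) * (g s ^ 2 * (h s)⁻¹) := mul_le_mul_left (hcol s hs) _
          _ = g s ^ 2 * (h s)⁻¹ * (A * h s) := by ring
    _ = A * (A * ∫⁻ s in Ioc (0:ℝ) T, g s ^ 2) := by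
        congr 1
        rw [← lintegral_const_mul' _ _ hAtop]
        apply setLIntegral_congr_fun_ae measurableSet_Ioc (ae_of_all _ fun s hs => ?_)
        have hcancel : (h s)⁻¹ * h s = 1 :=
          ENNReal.inv_mul_cancel (h_ne_zero hs.1) (hhtop s)
        calc g s ^ 2 * (h s)⁻¹ * (A * h s) = A * (g s ^ 2 * ((h s)⁻¹ * h s)) := by ring
          _ = A * g s ^ 2 := by rw [hcancel, mul_one]
    _ = A ^ 2 * ∫⁻ s in Ioc (0:ℝ) T, g s ^ 2 := by rw [← mul_assoc, sq]


/-- Pointwise bound of the norm of `dotKH` by the kernel lintegral. -/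
lemma dotKH_pointwise {n : ℕ} {H T : ℝ} (hH : 1/2 < H) (hH1 : H < 1)
    (f : ℝ → EuclideanSpace ℝ (Fin n)) {t : ℝ} (ht : t ∈ Ioc (0:ℝ) T) :
    ENNReal.ofReal ‖dotKH H f t‖
      ≤ ∫⁻ s in Ioc (0:ℝ) t, Kk H t s * ENNReal.ofReal ‖f s‖ := by
  obtain ⟨ht0, htT⟩ := ht
  have hCH := CH_nonneg H
  have htn : (0:ℝ) ≤ t ^ (H - 1/2) := Real.rpow_nonneg ht0.le _
  set c : ℝ := CH H * t ^ (H - 1/2) with hc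
  have hc0 : 0 ≤ c := mul_nonneg hCH htn
  set w : ℝ → ℝ := fun s => (t - s) ^ (H - 3/2) * s ^ ((1:ℝ)/2 - H) with hw
  have hwnn : ∀ s ∈ Ioc (0:ℝ) t, 0 ≤ w s := fun s hs =>
    mul_nonneg (Real.rpow_nonneg (by linarith [hs.2]) _) (Real.rpow_nonneg hs.1.le _)
  -- step (a): norm bound through the interval integral
  have ha : ‖dotKH H f t‖ ≤ c * ∫ s in (0:ℝ)..t, ‖w s • f s‖ := by
    rw [dotKH, norm_smul, Real.norm_eq_abs, abs_of_nonneg hc0]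
    exact mul_le_mul_of_nonneg_left
      (intervalIntegral.norm_integral_le_integral_norm ht0.le) hc0
  -- step (c): kernel identity
  have hkey : ∀ s ∈ Ioc (0:ℝ) t,
      ENNReal.ofReal c * ENNReal.ofReal ‖w s • f s‖
        = Kk H t s * ENNReal.ofReal ‖f s‖ := by
    intro s hs
    have hnorm : ‖w s • f s‖ = w s * ‖f s‖ := by
      rw [norm_smul, Real.norm_eq_abs, abs_of_nonneg (hwnn s hs)]
    rcases eq_or_lt_of_le hs.2 with rfl | hst
    · have hzero : w s = 0 := by
        rw [hw]
        simp [Real.zero_rpow (by norm_num; intro h; linarith : H - 3/2 ≠ 0)]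
      have : ¬ (0 < s ∧ s < s) := fun h => lt_irrefl s h.2
      simp [Kk, this, hnorm, hzero]
    · rw [Kk, if_pos ⟨hs.1, hst⟩, hnorm]
      show ENNReal.ofReal c * ENNReal.ofReal (w s * ‖f s‖)
          = ENNReal.ofReal (c * w s) * ENNReal.ofReal ‖f s‖
      rw [ENNReal.ofReal_mul (hwnn s hs), ENNReal.ofReal_mul hc0, mul_assoc]
  -- combine
  calc ENNReal.ofReal ‖dotKH H f t‖
      ≤ ENNReal.ofReal (c * ∫ s in (0:ℝ)..t, ‖w s • f s‖) :=
        ENNReal.ofReal_le_ofReal ha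
    _ ≤ ENNReal.ofReal c * ∫⁻ s in Ioc (0:ℝ) t, ENNReal.ofReal ‖w s • f s‖ := by
        rw [ENNReal.ofReal_mul hc0, intervalIntegral.integral_of_le ht0.le]
        apply mul_le_mul_right
        by_cases hI : IntegrableOn (fun s => ‖w s • f s‖) (Ioc (0:ℝ) t) volume
        · rw [ofReal_integral_eq_lintegral_ofReal hI
            (ae_of_all _ fun s => norm_nonneg _)]
        · rw [integral_undef hI]
          simp
    _ = ∫⁻ s in Ioc (0:ℝ) t, ENNReal.ofReal c * ENNReal.ofReal ‖w s • f s‖ :=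
        (lintegral_const_mul' _ _ ENNReal.ofReal_ne_top).symm
    _ = ∫⁻ s in Ioc (0:ℝ) t, Kk H t s * ENNReal.ofReal ‖f s‖ :=
        setLIntegral_congr_fun_ae measurableSet_Ioc (ae_of_all _ hkey)


/-- The operator `K̇_H` is bounded on `L²([0,T];ℝⁿ)`: there is a constant `C > 0`,
depending only on `H` (and `T`), with
`∫_0^T |(K̇_H f)(t)|² dt ≤ C ∫_0^T |f(s)|² ds` for every `f ∈ L²([0,T];ℝⁿ)`. -/
theorem dotKH_bounded_L2
    (H T : ℝ) (n : ℕ) (hH : 1 / 2 < H) (hH1 : H < 1) (hT : 0 < T) :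
    ∃ C : ℝ, 0 < C ∧ ∀ f : ℝ → EuclideanSpace ℝ (Fin n),
      MemLp f 2 (volume.restrict (Ioc (0:ℝ) T)) →
      ∫ t in Ioc (0:ℝ) T, ‖dotKH H f t‖ ^ 2 ≤ C * ∫ s in Ioc (0:ℝ) T, ‖f s‖ ^ 2 := by
  set A : ℝ≥0∞ := ENNReal.ofReal (rowC H T) + ENNReal.ofReal (colC H T) with hA
  have hA2top : A ^ 2 ≠ ∞ := by simp [hA]
  refine ⟨(A ^ 2).toReal + 1, by positivity, ?_⟩
  intro f hf
  have hRnn : 0 ≤ ∫ s in Ioc (0:ℝ) T, ‖f s‖ ^ 2 :=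
    integral_nonneg fun s => sq_nonneg _
  set R : ℝ := ∫ s in Ioc (0:ℝ) T, ‖f s‖ ^ 2 with hR
  by_cases hI2 : Integrable (fun t => ‖dotKH H f t‖ ^ 2) (volume.restrict (Ioc (0:ℝ) T))
  swap
  · rw [integral_undef hI2]
    positivity
  -- measurable representative of f
  set φ := hf.1.mk f with hφdef
  have hφm : StronglyMeasurable φ := hf.1.stronglyMeasurable_mk
  have hfφ : f =ᵐ[volume.restrict (Ioc (0:ℝ) T)] φ := hf.1.ae_eq_mk
  set g : ℝ → ℝ≥0∞ := fun s => ENNReal.ofReal ‖φ s‖ with hg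
  have hgm : Measurable g := ENNReal.measurable_ofReal.comp hφm.measurable.norm
  -- pointwise bound
  have hpt : ∀ t ∈ Ioc (0:ℝ) T, ENNReal.ofReal (‖dotKH H f t‖ ^ 2)
      ≤ (∫⁻ s in Ioc (0:ℝ) T, Kk H t s * g s) ^ 2 := by
    intro t ht
    have h1 : ENNReal.ofReal ‖dotKH H f t‖
        ≤ ∫⁻ s in Ioc (0:ℝ) t, Kk H t s * ENNReal.ofReal ‖f s‖ :=
      dotKH_pointwise hH hH1 f ht
    have h2 : ∫⁻ s in Ioc (0:ℝ) t, Kk H t s * ENNReal.ofReal ‖f s‖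
        = ∫⁻ s in Ioc (0:ℝ) t, Kk H t s * g s := by
      apply lintegral_congr_ae
      have hsub : Ioc (0:ℝ) t ⊆ Ioc (0:ℝ) T := Ioc_subset_Ioc_right ht.2
      filter_upwards [ae_restrict_of_ae_restrict_of_subset hsub hfφ] with s hs
      rw [hs]
    have h3 : ∫⁻ s in Ioc (0:ℝ) t, Kk H t s * g s
        ≤ ∫⁻ s in Ioc (0:ℝ) T, Kk H t s * g s :=
      lintegral_mono_set (Ioc_subset_Ioc_right ht.2)
    calc ENNReal.ofReal (‖dotKH H f t‖ ^ 2)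
        = (ENNReal.ofReal ‖dotKH H f t‖) ^ 2 :=
          ENNReal.ofReal_pow (norm_nonneg _) 2
      _ ≤ (∫⁻ s in Ioc (0:ℝ) T, Kk H t s * g s) ^ 2 :=
          pow_le_pow_left₀ zero_le (h1.trans (h2.le.trans h3)) 2
  -- the L² norm of f
  have hfint : Integrable (fun s => ‖f s‖ ^ 2) (volume.restrict (Ioc (0:ℝ) T)) := by
    have := hf.integrable_norm_rpow two_ne_zero ENNReal.ofNat_ne_top
    apply this.congr
    apply ae_of_all
    intro s
    simp only [ENNReal.toReal_ofNat]
    rw [← Real.rpow_natCast ‖f s‖ 2]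
    norm_num
  have hg2 : ∫⁻ s in Ioc (0:ℝ) T, g s ^ 2 = ENNReal.ofReal R := by
    have e1 : ∫⁻ s in Ioc (0:ℝ) T, g s ^ 2
        = ∫⁻ s in Ioc (0:ℝ) T, ENNReal.ofReal (‖f s‖ ^ 2) := by
      apply lintegral_congr_ae
      filter_upwards [hfφ] with s hs
      rw [hg, hs, ← ENNReal.ofReal_pow (norm_nonneg _)]
    rw [e1, hR, ofReal_integral_eq_lintegral_ofReal hfint
      (ae_of_all _ fun s => sq_nonneg _)]
  -- put everything together
  have hchain : ENNReal.ofReal (∫ t in Ioc (0:ℝ) T, ‖dotKH H f t‖ ^ 2)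
      ≤ A ^ 2 * ENNReal.ofReal R := by
    calc ENNReal.ofReal (∫ t in Ioc (0:ℝ) T, ‖dotKH H f t‖ ^ 2)
        = ∫⁻ t in Ioc (0:ℝ) T, ENNReal.ofReal (‖dotKH H f t‖ ^ 2) :=
          ofReal_integral_eq_lintegral_ofReal hI2 (ae_of_all _ fun t => sq_nonneg _)
      _ ≤ ∫⁻ t in Ioc (0:ℝ) T, (∫⁻ s in Ioc (0:ℝ) T, Kk H t s * g s) ^ 2 :=
          setLIntegral_mono' measurableSet_Ioc hpt
      _ ≤ A ^ 2 * ∫⁻ s in Ioc (0:ℝ) T, g s ^ 2 := schur hH hH1 hgm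
      _ = A ^ 2 * ENNReal.ofReal R := by rw [hg2]
  have hLnn : 0 ≤ ∫ t in Ioc (0:ℝ) T, ‖dotKH H f t‖ ^ 2 :=
    integral_nonneg fun t => sq_nonneg _
  have := (ENNReal.toReal_le_toReal ENNReal.ofReal_ne_top
    (by simp [hA2top, ENNReal.mul_ne_top])).mpr hchain
  rw [ENNReal.toReal_ofReal hLnn, ENNReal.toReal_mul, ENNReal.toReal_ofReal hRnn] at this
  calc ∫ t in Ioc (0:ℝ) T, ‖dotKH H f t‖ ^ 2 ≤ (A ^ 2).toReal * R := this
    _ ≤ ((A ^ 2).toReal + 1) * R := by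
        apply mul_le_mul_of_nonneg_right _ hRnn
        linarith
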